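/- Let H be a (possibly unbounded) densely defined self-adjoint operator in a separable complex Hilbert space 𝓗, let V be a bounded self-adjoint operator on 𝓗, and let n ∈ ℕ. Then (H+V−i)⁻¹ − (H−i)⁻¹ ∈ S^n if and only if (H−i)⁻¹ V (H−i)⁻¹ ∈ S^n. -/

import Mathlib

open MeasureTheory Filter Topology Complex
open scoped ENNReal NNReal

noncomputable section

variable {𝓗 : Type} [NormedAddCommGroup 𝓗] [InnerProductSpace ℂ 𝓗] [CompleteSpace 𝓗]

/-- The weight function `u(x) = x - i`. -/
def uFun : ℝ → ℂ := fun x => (x : ℂ) - Complex.I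

/-- `f` is the inverse Fourier transform of an `L¹` function on `ℝ`. -/
def IsInvFourierOfL1 (f : ℝ → ℂ) : Prop :=
  ∃ g : ℝ → ℂ, Integrable g ∧ ∀ x : ℝ, f x = ∫ t : ℝ, g t * Complex.exp (Complex.I * t * x)

/-- The function class `𝒲ⁿₖ`:  `f ∈ Cⁿ` with `(f·uˡ)^{(m)}` an inverse Fourier transform of an
`L¹` function for all `l = 0,…,k`, `m = 0,…,n`. -/
def MemW (n k : ℕ) (f : ℝ → ℂ) : Prop :=
  ContDiff ℝ n f ∧
    ∀ l ≤ k, ∀ m ≤ n, IsInvFourierOfL1 (iteratedDeriv m (fun x => f x * uFun x ^ l))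

/-- Continuous functions vanishing at infinity. -/
def MemC0 (f : ℝ → ℂ) : Prop := Continuous f ∧ Tendsto f (cocompact ℝ) (𝓝 0)

/-- A finite complex (Radon) measure on `X`, given by its polar (Radon–Nikodym) representation
`dμ = ρ d|μ|` with `|ρ| = 1` a.e. -/
structure CMeasure (X : Type) [MeasurableSpace X] where
  meas : Measure X
  density : X → ℂ
  finite : IsFiniteMeasure meas
  ae_norm_one : ∀ᵐ x ∂meas, ‖density x‖ = 1

/-- Integral of `g` against the complex measure `μ`. -/
def CMeasure.integral {X : Type} [MeasurableSpace X] (μ : CMeasure X) (g : X → ℂ) : ℂ :=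
  ∫ x, g x * μ.density x ∂μ.meas

/-- Total variation norm of the complex measure `μ`. -/
def CMeasure.tv {X : Type} [MeasurableSpace X] (μ : CMeasure X) : ℝ :=
  (μ.meas Set.univ).toReal

/-- `∑ |⟨f j, T e j⟩|^p` maximized over finite orthonormal systems:  this equals `‖T‖_p^p`. -/
def schattenSum (p : ℝ) (T : 𝓗 →L[ℂ] 𝓗) : ℝ≥0∞ :=
  ⨆ (k : ℕ) (e : Fin k → 𝓗) (f : Fin k → 𝓗) (_ : Orthonormal ℂ e) (_ : Orthonormal ℂ f),
    ∑ j : Fin k, (‖(inner ℂ (f j) (T (e j)) : ℂ)‖₊ : ℝ≥0∞) ^ p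

/-- The Schatten `p`-norm (with values in `ℝ≥0∞`); for `p = ∞` it is the operator norm,
following the convention `S^∞ = B(𝓗)`. -/
def schattenNorm (p : ℝ≥0∞) (T : 𝓗 →L[ℂ] 𝓗) : ℝ≥0∞ :=
  if p = ∞ then (‖T‖₊ : ℝ≥0∞) else (schattenSum p.toReal T) ^ (1 / p.toReal)

/-- Membership in the Schatten–von Neumann ideal `S^p`. -/
def MemSchatten (p : ℝ≥0∞) (T : 𝓗 →L[ℂ] 𝓗) : Prop := schattenNorm p T ≠ ∞

/-- The trace, computed in a fixed Hilbert basis; for trace-class operators this is the trace. -/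
def opTrace (T : 𝓗 →L[ℂ] 𝓗) : ℂ :=
  ∑' i, (inner ℂ (((exists_hilbertBasis ℂ 𝓗).choose_spec.choose i : 𝓗))
      (T ((exists_hilbertBasis ℂ 𝓗).choose_spec.choose i)) : ℂ)

/-- `R` is the (bounded, everywhere defined) resolvent `(H - z)⁻¹` of the possibly unbounded
operator `H`. -/
def IsResolvent (H : 𝓗 →ₗ.[ℂ] 𝓗) (z : ℂ) (R : 𝓗 →L[ℂ] 𝓗) : Prop :=
  (∀ x : 𝓗, ∃ hx : R x ∈ H.domain, H ⟨R x, hx⟩ - z • R x = x) ∧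
  (∀ x : H.domain, R (H x - z • (x : 𝓗)) = x)

/-- The sum `H + V` of a partially defined operator and a bounded operator. -/
def pmapAdd (H : 𝓗 →ₗ.[ℂ] 𝓗) (V : 𝓗 →L[ℂ] 𝓗) : 𝓗 →ₗ.[ℂ] 𝓗 :=
  ⟨H.domain, H.toFun + (V.toLinearMap.comp H.domain.subtype)⟩

/-- `E` is the (projection-valued) spectral measure of the self-adjoint operator `H`:  it consists
of commuting self-adjoint projections, is countably additive on diagonal matrix elements, and its
Borel transform reproduces the resolvents of `H`. -/
structure IsSpectralMeasure (H : 𝓗 →ₗ.[ℂ] 𝓗) (E : Set ℝ → 𝓗 →L[ℂ] 𝓗) : Prop where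
  proj : ∀ S : Set ℝ, MeasurableSet S → E S ∘L E S = E S ∧ IsSelfAdjoint (E S)
  inter : ∀ S T : Set ℝ, MeasurableSet S → MeasurableSet T → E (S ∩ T) = E S ∘L E T
  univ : E Set.univ = 1
  diag : ∀ x : 𝓗, ∃ μ : Measure ℝ, IsFiniteMeasure μ ∧
    (∀ S : Set ℝ, MeasurableSet S → μ S = ENNReal.ofReal (‖E S x‖ ^ 2)) ∧
    ∀ (z : ℂ) (R : 𝓗 →L[ℂ] 𝓗), IsResolvent H z R →
      ∫ lam : ℝ, ((lam : ℂ) - z)⁻¹ ∂μ = (inner ℂ x (R x) : ℂ)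

/-- `A = f(H)`, via the spectral measure of `H`. -/
def IsFunCalc (H : 𝓗 →ₗ.[ℂ] 𝓗) (f : ℝ → ℂ) (A : 𝓗 →L[ℂ] 𝓗) : Prop :=
  ∃ E : Set ℝ → 𝓗 →L[ℂ] 𝓗, IsSpectralMeasure H E ∧
    ∀ x : 𝓗, ∃ μ : Measure ℝ, IsFiniteMeasure μ ∧
      (∀ S : Set ℝ, MeasurableSet S → μ S = ENNReal.ofReal (‖E S x‖ ^ 2)) ∧
      (inner ℂ x (A x) : ℂ) = ∫ lam : ℝ, f lam ∂μ

/-- The `n`-th Taylor remainder `F(1) - ∑_{k<n} (1/k!) F^{(k)}(0)` of the operator family `F`,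
where for `F t = f(H + tV)` this is `R_{n,H,f}(V)`; the derivatives are Fréchet derivatives in
the operator norm. -/
def taylorRemainder (n : ℕ) (F : ℝ → 𝓗 →L[ℂ] 𝓗) : 𝓗 →L[ℂ] 𝓗 :=
  F 1 - ∑ k ∈ Finset.range n, ((Nat.factorial k : ℝ))⁻¹ • iteratedDeriv k F 0

/-- The standard simplex `{t : 0 ≤ tᵢ, ∑ tᵢ ≤ 1}`. -/
def stdSimplex' (n : ℕ) : Set (Fin n → ℝ) := {t | (∀ i, 0 ≤ t i) ∧ ∑ i, t i ≤ 1}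

/-- The `n`-th divided difference `f^{[n]}(λ₀,…,λₙ)` (Hermite–Genocchi formula, which for
`f ∈ Cⁿ` agrees with the recursive limit definition). -/
def divDiff {n : ℕ} (f : ℝ → ℂ) (lam : Fin (n + 1) → ℝ) : ℂ :=
  ∫ t in stdSimplex' n, iteratedDeriv n f (lam 0 + ∑ i, t i * (lam i.succ - lam 0))

/-- The chain `P₀ V₁ P₁ V₂ ⋯ Vₖ Pₖ`. -/
def moiChain : (k : ℕ) → (Fin (k + 1) → 𝓗 →L[ℂ] 𝓗) → (Fin k → 𝓗 →L[ℂ] 𝓗) → (𝓗 →L[ℂ] 𝓗)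
  | 0, P, _ => P 0
  | (k + 1), P, V => (P 0) ∘L (V 0) ∘L moiChain k (fun j => P j.succ) (fun j => V j.succ)

/-- The Riemann sum approximating the multiple operator integral on the grid `1/m`, truncated
at `N`. -/
def moiSum {k : ℕ} (Es : Fin (k + 1) → Set ℝ → 𝓗 →L[ℂ] 𝓗) (φ : (Fin (k + 1) → ℝ) → ℂ)
    (Vs : Fin k → 𝓗 →L[ℂ] 𝓗) (m N : ℕ) : 𝓗 →L[ℂ] 𝓗 :=
  ∑ l ∈ Fintype.piFinset (fun _ : Fin (k + 1) => Finset.Ico (-(N : ℤ)) (N : ℤ)),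
    φ (fun j => (l j : ℝ) / (m : ℝ)) •
      moiChain k (fun j => Es j (Set.Ico ((l j : ℝ) / (m : ℝ)) (((l j : ℝ) + 1) / (m : ℝ)))) Vs

/-- `T` is the multiple operator integral `T^{H₀,…,Hₖ}_φ(V₁,…,Vₖ)`, defined as the iterated limit
(first `N → ∞`, then the mesh `1/m → 0`) of the Riemann sums built from the spectral measures of
the `Hⱼ`. -/
def IsMOI {k : ℕ} (Hs : Fin (k + 1) → 𝓗 →ₗ.[ℂ] 𝓗) (φ : (Fin (k + 1) → ℝ) → ℂ)
    (Vs : Fin k → 𝓗 →L[ℂ] 𝓗) (T : 𝓗 →L[ℂ] 𝓗) : Prop :=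
  ∃ Es : Fin (k + 1) → Set ℝ → 𝓗 →L[ℂ] 𝓗, (∀ j, IsSpectralMeasure (Hs j) (Es j)) ∧
    ∃ S : ℕ → 𝓗 →L[ℂ] 𝓗,
      (∀ m : ℕ, Tendsto (fun N => moiSum Es φ Vs (m + 1) N) atTop (𝓝 (S m))) ∧
      Tendsto S atTop (𝓝 T)

/-- Symbols `L`, `0`, `R` indicating the position of resolvents. -/
inductive LZR : Type
  | L : LZR
  | Z : LZR
  | R : LZR
deriving DecidableEq

/-- `V̌ᵉ_j` (for `j = 1,…,m`, the perturbation between `H_{j-1}` and `H_j`):  resolvents are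
attached on the left if `ε_{j-1} = R` and on the right if `ε_j = L`.  Here `Rs j` is the
resolvent `(H_j - i)⁻¹`. -/
def checkV (Rs Vs : ℕ → 𝓗 →L[ℂ] 𝓗) (eps : ℕ → LZR) (j : ℕ) : 𝓗 →L[ℂ] 𝓗 :=
  (if eps (j - 1) = LZR.R then Rs (j - 1) else 1) ∘L Vs j ∘L
    (if eps j = LZR.L then Rs j else 1)

/-- `Ǔᵉ_j` (for `j = 0,…,m`, with the convention `ε_{-1} = 0`). -/
def checkU (Rs Us : ℕ → 𝓗 →L[ℂ] 𝓗) (eps : ℕ → LZR) (j : ℕ) : 𝓗 →L[ℂ] 𝓗 :=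
  (if j ≠ 0 ∧ eps (j - 1) = LZR.R then Rs (j - 1) else 1) ∘L Us j ∘L
    (if eps j = LZR.L then Rs j else 1)

/-- `V̄_j`:  equals `(H_{j-1}-i)⁻¹ V_j (H_j-i)⁻¹` for odd `j` and `V_j` for even `j`. -/
def barV (Rs Vs : ℕ → 𝓗 →L[ℂ] 𝓗) (j : ℕ) : 𝓗 →L[ℂ] 𝓗 :=
  if j % 2 = 1 then Rs (j - 1) ∘L Vs j ∘L Rs j else Vs j

/-- The ordered product `F_{a+1} F_{a+2} ⋯ F_b` (equal to `1` if `b ≤ a`), as in the notation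
`V̄_{a,b} = V̄_{a+1} ⋯ V̄_b`. -/
def ordProd (F : ℕ → 𝓗 →L[ℂ] 𝓗) (a b : ℕ) : 𝓗 →L[ℂ] 𝓗 :=
  (((List.range' (a + 1) (b - a)).map F)).prod

/-- Sequential convergence in the strong-* operator topology. -/
def SOStarTendsto (A : ℕ → 𝓗 →L[ℂ] 𝓗) (B : 𝓗 →L[ℂ] 𝓗) : Prop :=
  (∀ x : 𝓗, Tendsto (fun n => A n x) atTop (𝓝 (B x))) ∧
  (∀ x : 𝓗, Tendsto (fun n => ContinuousLinearMap.adjoint (A n) x) atTop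
    (𝓝 (ContinuousLinearMap.adjoint B x)))

/-- Sequential convergence in `𝓛^α`:  for `α = ∞` this is strong-* convergence (of bounded
operators), and for `α < ∞` it is convergence in the Schatten `α`-norm of elements of `S^α`. -/
def LpConvergence (α : ℝ≥0∞) (A : ℕ → 𝓗 →L[ℂ] 𝓗) (B : 𝓗 →L[ℂ] 𝓗) : Prop :=
  (α = ∞ ∧ SOStarTendsto A B) ∨
  (α ≠ ∞ ∧ (∀ n, MemSchatten α (A n)) ∧ MemSchatten α B ∧
    Tendsto (fun n => schattenNorm α (A n - B)) atTop (𝓝 0))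

end
noncomputable section StmtAux

variable {𝓗 : Type} [NormedAddCommGroup 𝓗] [InnerProductSpace ℂ 𝓗] [CompleteSpace 𝓗]

lemma le_schattenSum {p : ℝ} {T : 𝓗 →L[ℂ] 𝓗} {k : ℕ} {e f : Fin k → 𝓗}
    (he : Orthonormal ℂ e) (hf : Orthonormal ℂ f) :
    ∑ j : Fin k, (‖(inner ℂ (f j) (T (e j)) : ℂ)‖₊ : ℝ≥0∞) ^ p ≤ schattenSum p T :=
  le_iSup_of_le k <| le_iSup_of_le e <| le_iSup_of_le f <| le_iSup_of_le he <|
    le_iSup_of_le hf le_rfl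

lemma schattenSum_le {p : ℝ} {T : 𝓗 →L[ℂ] 𝓗} {C : ℝ≥0∞}
    (h : ∀ (k : ℕ) (e f : Fin k → 𝓗), Orthonormal ℂ e → Orthonormal ℂ f →
      ∑ j : Fin k, (‖(inner ℂ (f j) (T (e j)) : ℂ)‖₊ : ℝ≥0∞) ^ p ≤ C) :
    schattenSum p T ≤ C :=
  iSup_le fun k => iSup_le fun e => iSup_le fun f => iSup_le fun he => iSup_le fun hf =>
    h k e f he hf

lemma schattenSum_neg {p : ℝ} (T : 𝓗 →L[ℂ] 𝓗) : schattenSum p (-T) = schattenSum p T := by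
  have key : ∀ S : 𝓗 →L[ℂ] 𝓗, schattenSum p (-S) ≤ schattenSum p S := by
    intro S
    refine schattenSum_le fun k e f he hf => ?_
    refine le_trans (le_of_eq ?_) (le_schattenSum he hf)
    refine Finset.sum_congr rfl fun j _ => ?_
    simp [inner_neg_right]
  have h2 := key (-T)
  rw [neg_neg] at h2
  exact le_antisymm (key T) h2

lemma schattenSum_smul_le {p : ℝ} (hp : 0 ≤ p) (a : ℂ) (T : 𝓗 →L[ℂ] 𝓗) :
    schattenSum p (a • T) ≤ (‖a‖₊ : ℝ≥0∞) ^ p * schattenSum p T := by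
  refine schattenSum_le fun k e f he hf => ?_
  calc ∑ j : Fin k, (‖(inner ℂ (f j) ((a • T) (e j)) : ℂ)‖₊ : ℝ≥0∞) ^ p
      = ∑ j : Fin k, (‖a‖₊ : ℝ≥0∞) ^ p * (‖(inner ℂ (f j) (T (e j)) : ℂ)‖₊ : ℝ≥0∞) ^ p := by
        refine Finset.sum_congr rfl fun j _ => ?_
        rw [ContinuousLinearMap.smul_apply, inner_smul_right, nnnorm_mul, ENNReal.coe_mul,
          ENNReal.mul_rpow_of_nonneg _ _ hp]
    _ = (‖a‖₊ : ℝ≥0∞) ^ p * ∑ j : Fin k, (‖(inner ℂ (f j) (T (e j)) : ℂ)‖₊ : ℝ≥0∞) ^ p := by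
        rw [Finset.mul_sum]
    _ ≤ _ := mul_le_mul_right (le_schattenSum he hf) _

lemma schattenSum_add_le {p : ℝ} (hp : 0 ≤ p) (S T : 𝓗 →L[ℂ] 𝓗) :
    schattenSum p (S + T) ≤
      (2:ℝ≥0∞) ^ p * schattenSum p S + (2:ℝ≥0∞) ^ p * schattenSum p T := by
  have key : ∀ a b : ℂ, (‖a + b‖₊ : ℝ≥0∞) ^ p ≤
      (2:ℝ≥0∞) ^ p * (‖a‖₊ : ℝ≥0∞) ^ p + (2:ℝ≥0∞) ^ p * (‖b‖₊ : ℝ≥0∞) ^ p := by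
    intro a b
    have h1 : (‖a + b‖₊ : ℝ≥0∞) ≤ 2 * ((‖a‖₊ : ℝ≥0∞) ⊔ (‖b‖₊ : ℝ≥0∞)) := by
      calc (‖a + b‖₊ : ℝ≥0∞) ≤ (‖a‖₊ : ℝ≥0∞) + (‖b‖₊ : ℝ≥0∞) := by
            exact_mod_cast nnnorm_add_le a b
        _ ≤ ((‖a‖₊ : ℝ≥0∞) ⊔ (‖b‖₊ : ℝ≥0∞)) + ((‖a‖₊ : ℝ≥0∞) ⊔ (‖b‖₊ : ℝ≥0∞)) :=
            add_le_add le_sup_left le_sup_right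
        _ = 2 * ((‖a‖₊ : ℝ≥0∞) ⊔ (‖b‖₊ : ℝ≥0∞)) := (two_mul _).symm
    calc (‖a + b‖₊ : ℝ≥0∞) ^ p ≤ (2 * ((‖a‖₊ : ℝ≥0∞) ⊔ (‖b‖₊ : ℝ≥0∞))) ^ p :=
          ENNReal.rpow_le_rpow h1 hp
      _ = (2:ℝ≥0∞) ^ p * ((‖a‖₊ : ℝ≥0∞) ⊔ (‖b‖₊ : ℝ≥0∞)) ^ p :=
          ENNReal.mul_rpow_of_nonneg _ _ hp
      _ ≤ (2:ℝ≥0∞) ^ p * ((‖a‖₊ : ℝ≥0∞) ^ p + (‖b‖₊ : ℝ≥0∞) ^ p) := by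
          refine mul_le_mul_right ?_ _
          rcases le_total (‖a‖₊ : ℝ≥0∞) (‖b‖₊ : ℝ≥0∞) with h | h
          · rw [sup_eq_right.2 h]
            exact le_add_self
          · rw [sup_eq_left.2 h]
            exact le_self_add
      _ = _ := by rw [mul_add]
  refine schattenSum_le fun k e f he hf => ?_
  calc ∑ j : Fin k, (‖(inner ℂ (f j) ((S + T) (e j)) : ℂ)‖₊ : ℝ≥0∞) ^ p
      ≤ ∑ j : Fin k, ((2:ℝ≥0∞) ^ p * (‖(inner ℂ (f j) (S (e j)) : ℂ)‖₊ : ℝ≥0∞) ^ p +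
          (2:ℝ≥0∞) ^ p * (‖(inner ℂ (f j) (T (e j)) : ℂ)‖₊ : ℝ≥0∞) ^ p) := by
        refine Finset.sum_le_sum fun j _ => ?_
        have h := key (inner ℂ (f j) (S (e j)) : ℂ) (inner ℂ (f j) (T (e j)) : ℂ)
        simpa [inner_add_right] using h
    _ = (2:ℝ≥0∞) ^ p * ∑ j : Fin k, (‖(inner ℂ (f j) (S (e j)) : ℂ)‖₊ : ℝ≥0∞) ^ p +
        (2:ℝ≥0∞) ^ p * ∑ j : Fin k, (‖(inner ℂ (f j) (T (e j)) : ℂ)‖₊ : ℝ≥0∞) ^ p := by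
        rw [Finset.sum_add_distrib, Finset.mul_sum, Finset.mul_sum]
    _ ≤ _ := add_le_add (mul_le_mul_right (le_schattenSum he hf) _)
          (mul_le_mul_right (le_schattenSum he hf) _)

lemma memS_add {p : ℝ} (hp : 0 ≤ p) {S T : 𝓗 →L[ℂ] 𝓗} (hS : schattenSum p S ≠ ∞)
    (hT : schattenSum p T ≠ ∞) : schattenSum p (S + T) ≠ ∞ := by
  refine ne_top_of_le_ne_top ?_ (schattenSum_add_le hp S T)
  have h2 : (2:ℝ≥0∞) ^ p ≠ ∞ := ENNReal.rpow_ne_top_of_nonneg hp (by norm_num)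
  exact ENNReal.add_ne_top.2 ⟨ENNReal.mul_ne_top h2 hS, ENNReal.mul_ne_top h2 hT⟩

lemma schattenSum_comp_le {p : ℝ} (T U : 𝓗 →L[ℂ] 𝓗)
    (hU : ∀ x y : 𝓗, (inner ℂ (U x) (U y) : ℂ) = inner ℂ x y) :
    schattenSum p (T ∘L U) ≤ schattenSum p T := by
  refine schattenSum_le fun k e f he hf => ?_
  have he' : Orthonormal ℂ (fun j => U (e j)) := by
    rw [orthonormal_iff_ite] at he ⊢
    intro i j
    rw [hU]
    exact he i j
  exact le_schattenSum he' hf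

lemma exists_unitary_of_sa (c : 𝓗 →L[ℂ] 𝓗) (hc : IsSelfAdjoint c) (hnorm : ‖c‖ ≤ 1) :
    ∃ w : 𝓗 →L[ℂ] 𝓗, star w * w = 1 ∧ w * star w = 1 ∧
      c = (2⁻¹ : ℂ) • (w + star w) := by
  rcases subsingleton_or_nontrivial 𝓗 with hsub | hn
  · have : Subsingleton (𝓗 →L[ℂ] 𝓗) := ⟨fun a b => by ext x; exact Subsingleton.elim _ _⟩
    exact ⟨1, Subsingleton.elim _ _, Subsingleton.elim _ _, Subsingleton.elim _ _⟩
  · set s := cfc (fun x : ℝ => Real.sqrt (1 - x ^ 2)) c with hs_def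
    have hs : IsSelfAdjoint s := cfc_predicate _ _
    have hsq : ∀ x ∈ spectrum ℝ c, 0 ≤ 1 - x ^ 2 := by
      intro x hx
      have h1 : ‖x‖ ≤ ‖c‖ := spectrum.norm_le_norm_of_mem hx
      rw [Real.norm_eq_abs] at h1
      nlinarith [abs_nonneg x, _root_.sq_abs x]
    have hss : s * s = 1 - c * c := by
      rw [hs_def, ← cfc_mul _ _ c]
      rw [cfc_congr (g := fun x : ℝ => 1 - x * x)
        (fun x hx => by
          rw [Real.mul_self_sqrt (by have := hsq x hx; nlinarith)]; ring)]
      rw [cfc_sub (fun _ : ℝ => (1:ℝ)) (fun x : ℝ => x * x) c, cfc_const_one ℝ c]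
      have h3 : cfc (fun x : ℝ => x * x) c
          = cfc (fun x : ℝ => x) c * cfc (fun x : ℝ => x) c := cfc_mul _ _ c
      rw [h3, cfc_id' ℝ c]
    have hcs : c * s = s * c := by
      have h := cfc_commute_cfc (id : ℝ → ℝ) (fun x : ℝ => Real.sqrt (1 - x ^ 2)) c
      rw [cfc_id ℝ c] at h
      exact h.eq
    have hstar : star (c + Complex.I • s) = c - Complex.I • s := by
      rw [star_add, star_smul, hc.star_eq, hs.star_eq, Complex.star_def, Complex.conj_I,
        neg_smul, ← sub_eq_add_neg]
    have expand1 : (c - Complex.I • s) * (c + Complex.I • s) = c * c + s * s := by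
      rw [sub_mul, mul_add, mul_add, smul_mul_assoc, smul_mul_assoc, mul_smul_comm,
        mul_smul_comm, hcs, smul_smul, Complex.I_mul_I, neg_smul, one_smul]
      abel
    have expand2 : (c + Complex.I • s) * (c - Complex.I • s) = c * c + s * s := by
      rw [add_mul, mul_sub, mul_sub, smul_mul_assoc, smul_mul_assoc, mul_smul_comm,
        mul_smul_comm, hcs, smul_smul, Complex.I_mul_I, neg_smul, one_smul]
      abel
    refine ⟨c + Complex.I • s, ?_, ?_, ?_⟩
    · rw [hstar, expand1, hss]
      abel
    · rw [hstar, expand2, hss]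
      abel
    · rw [hstar]
      module

lemma memS_comp_right {p : ℝ} (hp : 0 ≤ p) (T B : 𝓗 →L[ℂ] 𝓗)
    (hT : schattenSum p T ≠ ∞) : schattenSum p (T ∘L B) ≠ ∞ := by
  have unit_comp : ∀ (a : ℂ) (w : 𝓗 →L[ℂ] 𝓗), star w * w = 1 →
      schattenSum p (T ∘L (a • w)) ≠ ∞ := by
    intro a w hw
    have hUinner : ∀ x y : 𝓗, (inner ℂ (w x) (w y) : ℂ) = inner ℂ x y := by
      intro x y
      have h1 : (star w) (w y) = y := by
        have h := congrArg (fun Z : 𝓗 →L[ℂ] 𝓗 => Z y) hw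
        simpa [ContinuousLinearMap.mul_apply] using h
      conv_rhs => rw [← h1]
      rw [ContinuousLinearMap.star_eq_adjoint]
      exact (ContinuousLinearMap.adjoint_inner_right w x (w y)).symm
    have hcomp : T ∘L (a • w) = a • (T ∘L w) := by
      ext x
      simp
    rw [hcomp]
    refine ne_top_of_le_ne_top ?_ (schattenSum_smul_le hp a (T ∘L w))
    exact ENNReal.mul_ne_top (ENNReal.rpow_ne_top_of_nonneg hp ENNReal.coe_ne_top)
      (ne_top_of_le_ne_top hT (schattenSum_comp_le T w hUinner))
  rcases subsingleton_or_nontrivial 𝓗 with hsub | hn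
  · have hsub2 : Subsingleton (𝓗 →L[ℂ] 𝓗) :=
      ⟨fun a b => by ext x; exact Subsingleton.elim _ _⟩
    rwa [Subsingleton.elim (T ∘L B) T]
  · set r : ℝ := ‖B‖ + 1 with hr_def
    have hr : 0 < r := by positivity
    set b₁ : 𝓗 →L[ℂ] 𝓗 := ((((2 * r)⁻¹ : ℝ)) : ℂ) • (B + star B) with hb₁
    set b₂ : 𝓗 →L[ℂ] 𝓗 := ((((2 * r)⁻¹ : ℝ)) : ℂ) • (Complex.I • (star B - B)) with hb₂
    have hb₁sa : IsSelfAdjoint b₁ := by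
      rw [IsSelfAdjoint, hb₁, star_smul, star_add, star_star, Complex.star_def,
        Complex.conj_ofReal, add_comm]
    have hb₂sa : IsSelfAdjoint b₂ := by
      rw [IsSelfAdjoint, hb₂, star_smul, star_smul, star_sub, star_star, Complex.star_def,
        Complex.conj_ofReal, Complex.conj_I, neg_smul, ← smul_neg, neg_sub]
    have hstarB : ‖B + star B‖ ≤ 2 * ‖B‖ := by
      calc ‖B + star B‖ ≤ ‖B‖ + ‖star B‖ := norm_add_le _ _
        _ = 2 * ‖B‖ := by rw [norm_star]; ring
    have hstarB2 : ‖star B - B‖ ≤ 2 * ‖B‖ := by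
      calc ‖star B - B‖ ≤ ‖star B‖ + ‖B‖ := norm_sub_le _ _
        _ = 2 * ‖B‖ := by rw [norm_star]; ring
    have hcoef : ‖((((2 * r)⁻¹ : ℝ)) : ℂ)‖ = (2 * r)⁻¹ := by
      rw [Complex.norm_real, Real.norm_eq_abs, abs_of_pos (by positivity)]
    have hkey : ∀ X : 𝓗 →L[ℂ] 𝓗, ‖X‖ ≤ 2 * ‖B‖ →
        ‖((((2 * r)⁻¹ : ℝ)) : ℂ) • X‖ ≤ 1 := by
      intro X hX
      rw [norm_smul, hcoef]
      rw [inv_mul_le_iff₀ (by positivity)]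
      have : ‖B‖ ≤ r := by rw [hr_def]; linarith
      linarith
    have hb₁n : ‖b₁‖ ≤ 1 := hkey _ hstarB
    have hb₂n : ‖b₂‖ ≤ 1 := by
      refine hkey _ ?_
      rw [norm_smul, Complex.norm_I, one_mul]
      exact hstarB2
    obtain ⟨w₁, hw₁, hw₁', hcw₁⟩ := exists_unitary_of_sa b₁ hb₁sa hb₁n
    obtain ⟨w₂, hw₂, hw₂', hcw₂⟩ := exists_unitary_of_sa b₂ hb₂sa hb₂n
    have hw₁'' : star (star w₁) * star w₁ = 1 := by rw [star_star]; exact hw₁'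
    have hw₂'' : star (star w₂) * star w₂ = 1 := by rw [star_star]; exact hw₂'
    have hrc : ((r : ℝ) : ℂ) * ((((2 * r)⁻¹ : ℝ)) : ℂ) = 2⁻¹ := by
      have hr' : ((r : ℝ) : ℂ) ≠ 0 := by exact_mod_cast hr.ne'
      push_cast
      field_simp
    have h₁ : ((r : ℝ) : ℂ) • b₁ = (2⁻¹ : ℂ) • (B + star B) := by
      rw [hb₁, smul_smul, hrc]
    have h₂ : (((r : ℝ) : ℂ) * Complex.I) • b₂
        = ((2⁻¹ : ℂ) * (Complex.I * Complex.I)) • (star B - B) := by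
      rw [hb₂, smul_smul, smul_smul]
      congr 1
      linear_combination Complex.I * Complex.I * hrc
    have decomp : B = ((r : ℝ) : ℂ) • b₁ + (((r : ℝ) : ℂ) * Complex.I) • b₂ := by
      rw [h₁, h₂, Complex.I_mul_I]
      module
    have decomp2 : B = (((r : ℝ) : ℂ) * 2⁻¹) • w₁ + (((r : ℝ) : ℂ) * 2⁻¹) • star w₁ +
        ((((r : ℝ) : ℂ) * Complex.I * 2⁻¹) • w₂ +
          (((r : ℝ) : ℂ) * Complex.I * 2⁻¹) • star w₂) := by
      rw [decomp, hcw₁, hcw₂]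
      module
    rw [decomp2, ContinuousLinearMap.comp_add, ContinuousLinearMap.comp_add,
      ContinuousLinearMap.comp_add]
    exact memS_add hp (memS_add hp (unit_comp _ _ hw₁) (unit_comp _ _ hw₁''))
      (memS_add hp (unit_comp _ _ hw₂) (unit_comp _ _ hw₂''))

lemma memSchatten_iff {n : ℕ} (hn : 1 ≤ n) (T : 𝓗 →L[ℂ] 𝓗) :
    MemSchatten (n : ℝ≥0∞) T ↔ schattenSum (n : ℝ) T ≠ ∞ := by
  have hpos : (0:ℝ) < 1 / (n : ℝ) := by
    have : (0:ℝ) < (n : ℝ) := by exact_mod_cast hn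
    positivity
  rw [MemSchatten, schattenNorm, if_neg (ENNReal.natCast_ne_top n), ENNReal.toReal_natCast]
  constructor
  · intro h hS
    exact h (by rw [hS, ENNReal.top_rpow_of_pos hpos])
  · intro h hc
    rcases ENNReal.rpow_eq_top_iff.1 hc with ⟨-, hneg⟩ | ⟨htop, -⟩
    · linarith
    · exact h htop

end StmtAux

/-- `(H+V-i)⁻¹ - (H-i)⁻¹ ∈ Sⁿ  ↔  (H-i)⁻¹ V (H-i)⁻¹ ∈ Sⁿ`. -/
theorem stmt_8 {𝓗 : Type} [NormedAddCommGroup 𝓗] [InnerProductSpace ℂ 𝓗] [CompleteSpace 𝓗]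
    [TopologicalSpace.SeparableSpace 𝓗]
    (n : ℕ) (hn : 1 ≤ n) (H : 𝓗 →ₗ.[ℂ] 𝓗) (hH : IsSelfAdjoint H)
    (V : 𝓗 →L[ℂ] 𝓗) (hV : IsSelfAdjoint V)
    (R RV : 𝓗 →L[ℂ] 𝓗) (hR : IsResolvent H Complex.I R)
    (hRV : IsResolvent (pmapAdd H V) Complex.I RV) :
    MemSchatten (n : ℝ≥0∞) (RV - R) ↔ MemSchatten (n : ℝ≥0∞) (R ∘L V ∘L R) := by
  have key1 : ∀ x : 𝓗, RV x + RV (V (R x)) = R x := by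
    intro x
    obtain ⟨hx, hEq⟩ := hR.1 x
    have h2 : RV ((pmapAdd H V) ⟨R x, hx⟩ - Complex.I • R x) = R x := hRV.2 ⟨R x, hx⟩
    have h4 : (pmapAdd H V) ⟨R x, hx⟩ - Complex.I • R x = x + V (R x) := by
      show H ⟨R x, hx⟩ + V (R x) - Complex.I • R x = x + V (R x)
      calc H ⟨R x, hx⟩ + V (R x) - Complex.I • R x
          = (H ⟨R x, hx⟩ - Complex.I • R x) + V (R x) := by abel
        _ = x + V (R x) := by rw [hEq]
    rw [h4, map_add] at h2
    exact h2
  have key2 : ∀ x : 𝓗, R x - R (V (RV x)) = RV x := by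
    intro x
    obtain ⟨hx, hEq⟩ := hRV.1 x
    have hx' : RV x ∈ H.domain := hx
    have hEq' : H ⟨RV x, hx'⟩ + V (RV x) - Complex.I • RV x = x := hEq
    have h5 : H ⟨RV x, hx'⟩ - Complex.I • RV x = x - V (RV x) := by
      calc H ⟨RV x, hx'⟩ - Complex.I • RV x
          = (H ⟨RV x, hx'⟩ + V (RV x) - Complex.I • RV x) - V (RV x) := by abel
        _ = x - V (RV x) := by rw [hEq']
    have h2 : R (H ⟨RV x, hx'⟩ - Complex.I • RV x) = RV x := hR.2 ⟨RV x, hx'⟩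
    rw [h5, map_sub] at h2
    exact h2
  have eqB : R ∘L V ∘L R = -(RV - R) - (RV - R) ∘L (V ∘L R) := by
    ext x
    simp only [ContinuousLinearMap.coe_comp', Function.comp_apply,
      ContinuousLinearMap.sub_apply, ContinuousLinearMap.neg_apply]
    have h' : RV (V (R x)) = R x - RV x := eq_sub_of_add_eq' (key1 x)
    rw [h']
    abel
  have eqA : RV - R = -(R ∘L V ∘L R) + (R ∘L V ∘L R) ∘L (V ∘L RV) := by
    ext x
    simp only [ContinuousLinearMap.coe_comp', Function.comp_apply,
      ContinuousLinearMap.sub_apply, ContinuousLinearMap.neg_apply,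
      ContinuousLinearMap.add_apply]
    have h' : R (V (RV x)) = R x - RV x :=
      eq_sub_of_add_eq' (sub_eq_iff_eq_add.mp (key2 x)).symm
    rw [h', map_sub, map_sub, h']
    abel
  have hp : (0:ℝ) ≤ (n : ℝ) := Nat.cast_nonneg n
  rw [memSchatten_iff hn, memSchatten_iff hn]
  constructor
  · intro hA
    rw [eqB, sub_eq_add_neg]
    refine memS_add hp ?_ ?_
    · rw [schattenSum_neg]; exact hA
    · rw [schattenSum_neg]; exact memS_comp_right hp _ _ hA
  · intro hB
    rw [eqA]
    refine memS_add hp ?_ ?_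
    · rw [schattenSum_neg]; exact hB
    · exact memS_comp_right hp _ _ hB
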